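/- Let α, β, a0, b0, a1, b1 > 0. Suppose γ, U, V are independent random variables with (1-γ)/(1+γ) ~ Beta(β,α), U ~ Beta(a0,b0), V ~ Beta(a1,b1). Then the triple (γ, Λ₀, Λ₁) := (γ, U/(1+γ), V/(1+γ)) has density π(γ,λ0,λ1) = (2^{α}/B(α,β)) · γ^{α-1}(1-γ)^{β-1}/(1+γ)^{α+β-a0-a1} · λ0^{a0-1}[1-(1+γ)λ0]^{b0-1}/B(a0,b0) · λ1^{a1-1}[1-(1+γ)λ1]^{b1-1}/B(a1,b1) with respect to Lebesgue measure on Ω = {(γ,λ0,λ1) : 0<γ<1, 0<λ0,λ1<1/(1+γ)}. In particular, taking α=β=a0=b0=a1=b1=1/2 gives Bernardo's reference prior for Dallal's model in the original parameterization (γ,λ0,λ1). -/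

import Mathlib

open MeasureTheory ProbabilityTheory

/-- The Beta function `B(a,b) = Γ(a)Γ(b)/Γ(a+b)`. -/
noncomputable def betaFn (a b : ℝ) : ℝ := Real.Gamma a * Real.Gamma b / Real.Gamma (a + b)

/-- The law of a `Beta(a,b)` random variable: density `x^{a-1}(1-x)^{b-1}/B(a,b)`
on `(0,1)` with respect to Lebesgue measure. -/
noncomputable def betaLaw (a b : ℝ) : Measure ℝ :=
  volume.withDensity (fun x => ENNReal.ofReal
    (Set.indicator (Set.Ioo (0 : ℝ) 1) (fun t => t ^ (a - 1) * (1 - t) ^ (b - 1) / betaFn a b) x))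

namespace DallalAux

open Set Real ENNReal

lemma betaFn_pos {a b : ℝ} (ha : 0 < a) (hb : 0 < b) : 0 < betaFn a b := by
  have := Real.Gamma_pos_of_pos ha
  have := Real.Gamma_pos_of_pos hb
  have := Real.Gamma_pos_of_pos (add_pos ha hb)
  unfold betaFn; positivity

lemma betaFn_symm (a b : ℝ) : betaFn a b = betaFn b a := by
  unfold betaFn; rw [mul_comm, add_comm]

lemma my_lintegral_image {s : Set ℝ} {f f' : ℝ → ℝ} (hs : MeasurableSet s)
    (hf' : ∀ x ∈ s, HasDerivWithinAt f (f' x) s x) (hf : Set.InjOn f s) (g : ℝ → ℝ≥0∞) :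
    ∫⁻ x in f '' s, g x = ∫⁻ x in s, ENNReal.ofReal |f' x| * g (f x) := by
  simpa only [ContinuousLinearMap.det_toSpanSingleton] using
    lintegral_image_eq_lintegral_abs_det_fderiv_mul volume hs
      (fun x hx => (hf' x hx).hasFDerivWithinAt) hf g

lemma my_lintegral_scale {c : ℝ} (hc : 0 < c) {h : ℝ → ℝ≥0∞} (hh : Measurable h) :
    ∫⁻ x, h x = ENNReal.ofReal c * ∫⁻ x, h (c * x) := by
  have h1 : ∫⁻ x, h (c * x) = ENNReal.ofReal |c⁻¹| * ∫⁻ x, h x := by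
    rw [← lintegral_map hh (measurable_const_mul c), Real.map_volume_mul_left hc.ne',
      lintegral_smul_measure, smul_eq_mul]
  rw [h1, ← mul_assoc, ← ENNReal.ofReal_mul hc.le, abs_of_pos (by positivity),
    mul_inv_cancel₀ hc.ne', ENNReal.ofReal_one, one_mul]

lemma my_lintegral_scale' {c : ℝ} (hc : 0 < c) {h : ℝ → ℝ≥0∞} (hh : Measurable h) :
    ∫⁻ x, h x = ENNReal.ofReal c * ∫⁻ x, h (x * c) := by
  rw [my_lintegral_scale hc hh]
  congr 1
  exact lintegral_congr fun x => by rw [mul_comm]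

lemma key_real_identity (α β a0 a1 B : ℝ) (hB : 0 < B) (t : ℝ) (ht : 0 < t) (ht1 : t < 1) :
    (2 / ((1+t)*(1+t))) *
      ((2:ℝ) ^ α / B * (((1-t)/(1+t)) ^ (α-1) * (1 - (1-t)/(1+t)) ^ (β-1) /
        (1 + (1-t)/(1+t)) ^ (α+β-a0-a1))) * ((1+t)/2) ^ a0 * ((1+t)/2) ^ a1
    = t ^ (β-1) * (1-t) ^ (α-1) / B := by
  have hp : (0:ℝ) < 1 + t := by linarith
  have h1t : (0:ℝ) < 1 - t := by linarith
  have h2 : (0:ℝ) < 2 := two_pos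
  have hg1 : 1 - (1-t)/(1+t) = 2*t/(1+t) := by field_simp; ring
  have hg2 : 1 + (1-t)/(1+t) = 2/(1+t) := by field_simp; ring
  rw [hg1, hg2]
  have e1 : ((1-t)/(1+t)) ^ (α-1) = (1-t) ^ (α-1) / (1+t) ^ (α-1) :=
    Real.div_rpow h1t.le hp.le _
  have e2 : (2*t/(1+t)) ^ (β-1) = 2 ^ (β-1) * t ^ (β-1) / (1+t) ^ (β-1) := by
    rw [Real.div_rpow (by positivity) hp.le, Real.mul_rpow h2.le ht.le]
  have e3 : (2/(1+t)) ^ (α+β-a0-a1) = 2 ^ (α+β-a0-a1) / (1+t) ^ (α+β-a0-a1) :=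
    Real.div_rpow h2.le hp.le _
  have e4 : ((1+t)/2) ^ a0 = (1+t) ^ a0 / 2 ^ a0 := Real.div_rpow hp.le h2.le _
  have e5 : ((1+t)/2) ^ a1 = (1+t) ^ a1 / 2 ^ a1 := Real.div_rpow hp.le h2.le _
  have esq : (1+t)*(1+t) = (1+t) ^ (2:ℝ) := by
    rw [show (2:ℝ) = ((2:ℕ):ℝ) by norm_num, Real.rpow_natCast]; ring
  have e6 : (2:ℝ) = (2:ℝ) ^ (1:ℝ) := (Real.rpow_one 2).symm
  rw [e1, e2, e3, e4, e5, esq]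
  nth_rewrite 1 [e6]
  have hL : (0:ℝ) < (2:ℝ)^(1:ℝ) / (1+t)^(2:ℝ) *
      ((2:ℝ) ^ α / B * ((1-t)^(α-1)/(1+t)^(α-1) * (2^(β-1)*t^(β-1)/(1+t)^(β-1)) /
        (2^(α+β-a0-a1)/(1+t)^(α+β-a0-a1)))) * ((1+t)^a0/2^a0) * ((1+t)^a1/2^a1) := by
    positivity
  have hR : (0:ℝ) < t ^ (β-1) * (1-t) ^ (α-1) / B := by positivity
  rw [← Real.exp_log hL, ← Real.exp_log hR]
  congr 1
  have l2 : ∀ x : ℝ, Real.log ((2:ℝ) ^ x) = x * Real.log 2 := fun x => Real.log_rpow h2 x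
  have lp : ∀ x : ℝ, Real.log ((1+t) ^ x) = x * Real.log (1+t) := fun x => Real.log_rpow hp x
  have lt' : ∀ x : ℝ, Real.log (t ^ x) = x * Real.log t := fun x => Real.log_rpow ht x
  have l1t : ∀ x : ℝ, Real.log ((1-t) ^ x) = x * Real.log (1-t) := fun x => Real.log_rpow h1t x
  have hBne : B ≠ 0 := hB.ne'
  have n2 : ∀ x : ℝ, (2:ℝ) ^ x ≠ 0 := fun x => (rpow_pos_of_pos h2 x).ne'
  have np : ∀ x : ℝ, ((1+t):ℝ) ^ x ≠ 0 := fun x => (rpow_pos_of_pos hp x).ne'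
  have nt : ∀ x : ℝ, (t:ℝ) ^ x ≠ 0 := fun x => (rpow_pos_of_pos ht x).ne'
  have n1t : ∀ x : ℝ, ((1-t):ℝ) ^ x ≠ 0 := fun x => (rpow_pos_of_pos h1t x).ne'
  simp only [Real.log_mul, Real.log_div, l2, lp, lt', l1t, hBne, n2, np, nt, n1t,
    ne_eq, _root_.mul_eq_zero, _root_.div_eq_zero_iff, or_self, not_false_eq_true, or_false, false_or]
  ring

lemma psi_one_add {t : ℝ} (ht : (1:ℝ) + t ≠ 0) : 1 + (1-t)/(1+t) = 2/(1+t) := by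
  field_simp; ring

lemma psi_one_sub {t : ℝ} (ht : (1:ℝ) + t ≠ 0) : 1 - (1-t)/(1+t) = 2*t/(1+t) := by
  field_simp; ring

lemma psi_mem {t : ℝ} (ht : t ∈ Set.Ioo (0:ℝ) 1) : (1-t)/(1+t) ∈ Set.Ioo (0:ℝ) 1 := by
  obtain ⟨h0, h1⟩ := ht
  constructor
  · exact div_pos (by linarith) (by linarith)
  · rw [div_lt_one (by linarith)]; linarith

lemma psi_invol {t : ℝ} (ht : (1:ℝ) + t ≠ 0) :
    (1 - (1-t)/(1+t))/(1 + (1-t)/(1+t)) = t := by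
  rw [psi_one_sub ht, psi_one_add ht]
  field_simp

lemma psi_image : (fun t : ℝ => (1-t)/(1+t)) '' Set.Ioo 0 1 = Set.Ioo 0 1 := by
  ext g
  constructor
  · rintro ⟨t, ht, rfl⟩; exact psi_mem ht
  · intro hg
    exact ⟨(1-g)/(1+g), psi_mem hg, psi_invol (by have := hg.1; positivity)⟩

lemma psi_inj : Set.InjOn (fun t : ℝ => (1-t)/(1+t)) (Set.Ioo 0 1) := by
  intro x hx y hy hxy
  have h1 : (1:ℝ) + x ≠ 0 := by have := hx.1; positivity
  have h2 : (1:ℝ) + y ≠ 0 := by have := hy.1; positivity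
  have := congrArg (fun z : ℝ => (1-z)/(1+z)) hxy
  simpa [psi_invol h1, psi_invol h2] using this

lemma psi_deriv {t : ℝ} (ht : t ∈ Set.Ioo (0:ℝ) 1) :
    HasDerivWithinAt (fun t : ℝ => (1-t)/(1+t)) (-2/((1+t)*(1+t))) (Set.Ioo 0 1) t := by
  have hne : (1:ℝ) + t ≠ 0 := by have := ht.1; positivity
  have h1 : HasDerivAt (fun t : ℝ => 1 - t) (-1) t := by
    simpa using (hasDerivAt_id t).const_sub 1
  have h2 : HasDerivAt (fun t : ℝ => 1 + t) 1 t := by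
    simpa using (hasDerivAt_id t).const_add 1
  have h := h1.div h2 hne
  have heq : (-1 * (1+t) - (1-t) * 1) / (1+t)^2 = -2/((1+t)*(1+t)) := by
    rw [sq]; ring_nf
  rw [heq] at h
  exact h.hasDerivWithinAt

noncomputable def dens (a b : ℝ) : ℝ → ℝ≥0∞ :=
  fun x => ENNReal.ofReal
    ((Set.Ioo (0:ℝ) 1).indicator (fun t => t ^ (a - 1) * (1 - t) ^ (b - 1) / betaFn a b) x)

lemma betaLaw_eq (a b : ℝ) : betaLaw a b = volume.withDensity (dens a b) := rfl

lemma dens_meas (a b : ℝ) : Measurable (dens a b) :=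
  ENNReal.measurable_ofReal.comp (Measurable.indicator (by fun_prop) measurableSet_Ioo)

lemma dens_ind (a b : ℝ) (x : ℝ) :
    dens a b x = (Set.Ioo (0:ℝ) 1).indicator
      (fun t => ENNReal.ofReal (t ^ (a - 1) * (1 - t) ^ (b - 1) / betaFn a b)) x := by
  unfold dens; by_cases h : x ∈ Set.Ioo (0:ℝ) 1 <;> simp [h]

noncomputable def dlam (a b g : ℝ) : ℝ → ℝ≥0∞ :=
  fun x => (Set.Ioo (0:ℝ) (1/(1+g))).indicator
    (fun x => ENNReal.ofReal (x ^ (a - 1) * (1 - (1+g)*x) ^ (b - 1) / betaFn a b)) x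

lemma dlam_meas (a b g : ℝ) : Measurable (dlam a b g) :=
  Measurable.indicator (by fun_prop) measurableSet_Ioo

noncomputable def wgam (α β a0 a1 : ℝ) (g : ℝ) : ℝ≥0∞ :=
  ENNReal.ofReal ((2:ℝ) ^ α / betaFn α β *
    (g ^ (α - 1) * (1 - g) ^ (β - 1) / (1 + g) ^ (α + β - a0 - a1)))

noncomputable def dgam (α β a0 a1 : ℝ) : ℝ → ℝ≥0∞ :=
  fun g => (Set.Ioo (0:ℝ) 1).indicator (wgam α β a0 a1) g

lemma dgam_meas (α β a0 a1 : ℝ) : Measurable (dgam α β a0 a1) :=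
  Measurable.indicator (by unfold wgam; fun_prop) measurableSet_Ioo

lemma triple_apply {dA dB dC : ℝ → ℝ≥0∞} (hA : Measurable dA) (hB : Measurable dB)
    (hC : Measurable dC) {s : Set (ℝ × ℝ × ℝ)} (hs : MeasurableSet s) :
    ((volume.withDensity dA).prod ((volume.withDensity dB).prod (volume.withDensity dC))) s
      = ∫⁻ t, dA t * ∫⁻ u, dB u * ∫⁻ v, dC v * s.indicator 1 (t, u, v) := by
  have hind : Measurable (s.indicator (1 : ℝ × ℝ × ℝ → ℝ≥0∞)) :=
    (measurable_one).indicator hs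
  have hin : Measurable fun q : (ℝ × ℝ) × ℝ => dC q.2 * s.indicator 1 (q.1.1, q.1.2, q.2) :=
    (hC.comp measurable_snd).mul (hind.comp
      ((measurable_fst.comp measurable_fst).prodMk
        ((measurable_snd.comp measurable_fst).prodMk measurable_snd)))
  have hmid : Measurable fun p : ℝ × ℝ => dB p.2 * ∫⁻ v, dC v * s.indicator 1 (p.1, p.2, v) :=
    (hB.comp measurable_snd).mul (Measurable.lintegral_prod_right' hin)
  rw [← lintegral_indicator_one hs]
  rw [lintegral_prod _ hind.aemeasurable]
  have h1 : ∀ t : ℝ, ∫⁻ z, s.indicator 1 (t, z)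
        ∂((volume.withDensity dB).prod (volume.withDensity dC))
      = ∫⁻ u, dB u * ∫⁻ v, dC v * s.indicator 1 (t, u, v) := by
    intro t
    have hind2 : Measurable fun z : ℝ × ℝ => s.indicator (1 : ℝ × ℝ × ℝ → ℝ≥0∞) (t, z) :=
      hind.comp (measurable_prodMk_left)
    rw [lintegral_prod _ hind2.aemeasurable]
    have h2 : ∀ u : ℝ, ∫⁻ v, s.indicator 1 (t, u, v) ∂(volume.withDensity dC)
        = ∫⁻ v, dC v * s.indicator 1 (t, u, v) := by
      intro u
      have h3 : Measurable fun v : ℝ => s.indicator (1 : ℝ × ℝ × ℝ → ℝ≥0∞) (t, u, v) :=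
        hind.comp (measurable_prodMk_left.comp measurable_prodMk_left)
      rw [lintegral_withDensity_eq_lintegral_mul volume hC h3]; rfl
    simp_rw [h2]
    have h5 : Measurable fun p : ℝ × ℝ => dC p.2 * s.indicator 1 (t, p.1, p.2) :=
      (hC.comp measurable_snd).mul (hind.comp
        (measurable_prodMk_left.comp (measurable_fst.prodMk measurable_snd)))
    have h6 : Measurable fun u : ℝ => ∫⁻ v, dC v * s.indicator 1 (t, u, v) :=
      Measurable.lintegral_prod_right' h5
    rw [lintegral_withDensity_eq_lintegral_mul volume hB h6]
    rfl
  simp_rw [h1]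
  rw [lintegral_withDensity_eq_lintegral_mul volume hA
    (Measurable.lintegral_prod_right' hmid)]
  rfl

noncomputable def Hfun : ℝ × ℝ × ℝ → ℝ × ℝ × ℝ :=
  fun p => ((1 - p.1) / (1 + p.1), p.2.1 * ((1 + p.1) / 2), p.2.2 * ((1 + p.1) / 2))

lemma Hfun_meas : Measurable Hfun := by unfold Hfun; fun_prop

lemma dlam_scale {a b t : ℝ} (ht : t ∈ Set.Ioo (0:ℝ) 1) (u : ℝ) :
    dlam a b ((1-t)/(1+t)) (u * ((1+t)/2))
      = ENNReal.ofReal (((1+t)/2) ^ (a-1)) * dens a b u := by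
  have hpt : (0:ℝ) < 1 + t := by have := ht.1; linarith
  have hc : (0:ℝ) < (1+t)/2 := by positivity
  have h1g : 1 + (1-t)/(1+t) = 2/(1+t) := psi_one_add hpt.ne'
  have hio : 1/(1 + (1-t)/(1+t)) = (1+t)/2 := by rw [h1g, one_div_div]
  unfold dlam dens
  by_cases hu : u ∈ Set.Ioo (0:ℝ) 1
  · have hmem : u * ((1+t)/2) ∈ Set.Ioo (0:ℝ) (1/(1 + (1-t)/(1+t))) := by
      rw [hio]
      constructor
      · exact mul_pos hu.1 hc
      · nth_rewrite 2 [show (1+t)/2 = 1 * ((1+t)/2) by ring]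
        exact mul_lt_mul_of_pos_right hu.2 hc
    rw [Set.indicator_of_mem hmem, Set.indicator_of_mem hu,
      ← ENNReal.ofReal_mul (by positivity)]
    congr 1
    have harg : (1 + (1-t)/(1+t)) * (u * ((1+t)/2)) = u := by
      rw [h1g]; field_simp
    rw [harg, Real.mul_rpow hu.1.le hc.le]
    ring
  · have hmem : u * ((1+t)/2) ∉ Set.Ioo (0:ℝ) (1/(1 + (1-t)/(1+t))) := by
      rw [hio]
      intro hm
      apply hu
      constructor
      · have := hm.1
        nlinarith
      · have h2 := hm.2
        nth_rewrite 2 [show (1+t)/2 = 1 * ((1+t)/2) by ring] at h2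
        exact lt_of_mul_lt_mul_right h2 hc.le
    rw [Set.indicator_of_notMem hmem, Set.indicator_of_notMem hu]
    simp

lemma main_comp {α β a0 b0 a1 b1 : ℝ} (hα : 0 < α) (hβ : 0 < β) (ha0 : 0 < a0)
    (hb0 : 0 < b0) (ha1 : 0 < a1) (hb1 : 0 < b1) :
    Measure.map Hfun ((betaLaw β α).prod ((betaLaw a0 b0).prod (betaLaw a1 b1))) =
      volume.withDensity (fun p => ENNReal.ofReal
        (Set.indicator
          {q : ℝ × ℝ × ℝ | 0 < q.1 ∧ q.1 < 1 ∧
            0 < q.2.1 ∧ q.2.1 < 1 / (1 + q.1) ∧ 0 < q.2.2 ∧ q.2.2 < 1 / (1 + q.1)}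
          (fun q =>
            (2 : ℝ) ^ α / betaFn α β * (q.1 ^ (α - 1) * (1 - q.1) ^ (β - 1) /
              (1 + q.1) ^ (α + β - a0 - a1)) *
            (q.2.1 ^ (a0 - 1) * (1 - (1 + q.1) * q.2.1) ^ (b0 - 1) / betaFn a0 b0) *
            (q.2.2 ^ (a1 - 1) * (1 - (1 + q.1) * q.2.2) ^ (b1 - 1) / betaFn a1 b1)) p)) := by
  have hH : Measurable Hfun := Hfun_meas
  have hB00 := betaFn_pos ha0 hb0
  have hB11 := betaFn_pos ha1 hb1
  have hBab := betaFn_pos hα hβ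
  set ρe : ℝ × ℝ × ℝ → ℝ≥0∞ := fun p => ENNReal.ofReal
        (Set.indicator
          {q : ℝ × ℝ × ℝ | 0 < q.1 ∧ q.1 < 1 ∧
            0 < q.2.1 ∧ q.2.1 < 1 / (1 + q.1) ∧ 0 < q.2.2 ∧ q.2.2 < 1 / (1 + q.1)}
          (fun q =>
            (2 : ℝ) ^ α / betaFn α β * (q.1 ^ (α - 1) * (1 - q.1) ^ (β - 1) /
              (1 + q.1) ^ (α + β - a0 - a1)) *
            (q.2.1 ^ (a0 - 1) * (1 - (1 + q.1) * q.2.1) ^ (b0 - 1) / betaFn a0 b0) *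
            (q.2.2 ^ (a1 - 1) * (1 - (1 + q.1) * q.2.2) ^ (b1 - 1) / betaFn a1 b1)) p)
    with hρe
  have hρmeas : Measurable ρe := by
    rw [hρe]
    apply ENNReal.measurable_ofReal.comp
    apply Measurable.indicator
    · fun_prop
    · apply MeasurableSet.inter (measurableSet_lt measurable_const measurable_fst)
      apply MeasurableSet.inter (measurableSet_lt measurable_fst measurable_const)
      apply MeasurableSet.inter
        (measurableSet_lt measurable_const (measurable_fst.comp measurable_snd))
      apply MeasurableSet.inter
        (measurableSet_lt (measurable_fst.comp measurable_snd) (by fun_prop))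
      exact MeasurableSet.inter
        (measurableSet_lt measurable_const (measurable_snd.comp measurable_snd))
        (measurableSet_lt (measurable_snd.comp measurable_snd) (by fun_prop))
  have hsplit : ∀ g x y : ℝ,
      ρe (g, x, y) = dgam α β a0 a1 g * dlam a0 b0 g x * dlam a1 b1 g y := by
    intro g x y
    simp only [hρe]
    by_cases h1 : g ∈ Set.Ioo (0:ℝ) 1
    · by_cases h2 : x ∈ Set.Ioo (0:ℝ) (1/(1+g))
      · by_cases h3 : y ∈ Set.Ioo (0:ℝ) (1/(1+g))
        · have hmem : ((g, x, y) : ℝ × ℝ × ℝ) ∈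
              {q : ℝ × ℝ × ℝ | 0 < q.1 ∧ q.1 < 1 ∧
                0 < q.2.1 ∧ q.2.1 < 1 / (1 + q.1) ∧ 0 < q.2.2 ∧ q.2.2 < 1 / (1 + q.1)} :=
            ⟨h1.1, h1.2, h2.1, h2.2, h3.1, h3.2⟩
          rw [Set.indicator_of_mem hmem]
          unfold dgam dlam wgam
          rw [Set.indicator_of_mem h1, Set.indicator_of_mem h2, Set.indicator_of_mem h3]
          have hg0 : (0:ℝ) < g := h1.1
          have hg1 : g < 1 := h1.2
          have h1g : (0:ℝ) < 1 + g := by linarith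
          have h1mg : (0:ℝ) < 1 - g := by linarith
          have hx1 : (0:ℝ) < 1 - (1+g)*x := by
            have := (lt_div_iff₀ h1g).mp h2.2
            nlinarith
          have w1 : (0:ℝ) ≤ (2:ℝ) ^ α / betaFn α β *
              (g ^ (α-1) * (1-g) ^ (β-1) / (1+g) ^ (α+β-a0-a1)) :=
            mul_nonneg (by positivity) (div_nonneg (mul_nonneg
              (Real.rpow_nonneg hg0.le _) (Real.rpow_nonneg h1mg.le _))
              (Real.rpow_nonneg h1g.le _))
          have w2 : (0:ℝ) ≤ (2:ℝ) ^ α / betaFn α β *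
              (g ^ (α-1) * (1-g) ^ (β-1) / (1+g) ^ (α+β-a0-a1)) *
              (x ^ (a0-1) * (1 - (1+g)*x) ^ (b0-1) / betaFn a0 b0) :=
            mul_nonneg w1 (div_nonneg (mul_nonneg
              (Real.rpow_nonneg h2.1.le _) (Real.rpow_nonneg hx1.le _)) hB00.le)
          rw [ENNReal.ofReal_mul w2, ENNReal.ofReal_mul w1]
        · have hnm : ((g, x, y) : ℝ × ℝ × ℝ) ∉
              {q : ℝ × ℝ × ℝ | 0 < q.1 ∧ q.1 < 1 ∧
                0 < q.2.1 ∧ q.2.1 < 1 / (1 + q.1) ∧ 0 < q.2.2 ∧ q.2.2 < 1 / (1 + q.1)} :=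
            fun hm => h3 ⟨hm.2.2.2.2.1, hm.2.2.2.2.2⟩
          rw [Set.indicator_of_notMem hnm]
          unfold dlam
          rw [Set.indicator_of_notMem h3]
          simp
      · have hnm : ((g, x, y) : ℝ × ℝ × ℝ) ∉
            {q : ℝ × ℝ × ℝ | 0 < q.1 ∧ q.1 < 1 ∧
              0 < q.2.1 ∧ q.2.1 < 1 / (1 + q.1) ∧ 0 < q.2.2 ∧ q.2.2 < 1 / (1 + q.1)} :=
          fun hm => h2 ⟨hm.2.2.1, hm.2.2.2.1⟩
        rw [Set.indicator_of_notMem hnm]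
        unfold dlam
        rw [Set.indicator_of_notMem h2]
        simp
    · have hnm : ((g, x, y) : ℝ × ℝ × ℝ) ∉
          {q : ℝ × ℝ × ℝ | 0 < q.1 ∧ q.1 < 1 ∧
            0 < q.2.1 ∧ q.2.1 < 1 / (1 + q.1) ∧ 0 < q.2.2 ∧ q.2.2 < 1 / (1 + q.1)} :=
        fun hm => h1 ⟨hm.1, hm.2.1⟩
      rw [Set.indicator_of_notMem hnm]
      unfold dgam
      rw [Set.indicator_of_notMem h1]
      simp
  ext s hs
  have hind : Measurable (s.indicator (1 : ℝ × ℝ × ℝ → ℝ≥0∞)) := measurable_one.indicator hs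
  -- Step 1 : left side as an iterated integral over (0,1) in t
  have hstep1 : Measure.map Hfun ((betaLaw β α).prod ((betaLaw a0 b0).prod (betaLaw a1 b1))) s
      = ∫⁻ t in Set.Ioo (0:ℝ) 1,
          ENNReal.ofReal (t ^ (β - 1) * (1 - t) ^ (α - 1) / betaFn β α) *
          ∫⁻ u, dens a0 b0 u * ∫⁻ v, dens a1 b1 v *
            s.indicator 1 ((1-t)/(1+t), u * ((1+t)/2), v * ((1+t)/2)) := by
    rw [Measure.map_apply hH hs, betaLaw_eq, betaLaw_eq, betaLaw_eq,
      triple_apply (dens_meas β α) (dens_meas a0 b0) (dens_meas a1 b1) (hH hs)]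
    have hHind : ∀ t u v : ℝ, (Hfun ⁻¹' s).indicator (1 : ℝ × ℝ × ℝ → ℝ≥0∞) (t, u, v)
        = s.indicator 1 ((1-t)/(1+t), u * ((1+t)/2), v * ((1+t)/2)) := by
      intro t u v
      by_cases h : ((1-t)/(1+t), u * ((1+t)/2), v * ((1+t)/2)) ∈ s
      · rw [Set.indicator_of_mem h, Set.indicator_of_mem
          (show (t, u, v) ∈ Hfun ⁻¹' s from h)]
        rfl
      · rw [Set.indicator_of_notMem h, Set.indicator_of_notMem
          (show (t, u, v) ∉ Hfun ⁻¹' s from h)]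
    simp_rw [hHind]
    have hpoint : ∀ t : ℝ, dens β α t * (∫⁻ u, dens a0 b0 u * ∫⁻ v, dens a1 b1 v *
          s.indicator 1 ((1-t)/(1+t), u * ((1+t)/2), v * ((1+t)/2)))
        = (Set.Ioo (0:ℝ) 1).indicator
            (fun t' => ENNReal.ofReal (t' ^ (β - 1) * (1 - t') ^ (α - 1) / betaFn β α) *
              ∫⁻ u, dens a0 b0 u * ∫⁻ v, dens a1 b1 v *
                s.indicator 1 ((1-t')/(1+t'), u * ((1+t')/2), v * ((1+t')/2))) t := by
      intro t
      rw [dens_ind]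
      by_cases h : t ∈ Set.Ioo (0:ℝ) 1 <;> simp [h]
    simp_rw [hpoint]
    rw [lintegral_indicator measurableSet_Ioo]
  -- Step 2 : right side as an iterated integral over (0,1) in g
  have hstep2 : volume.withDensity ρe s
      = ∫⁻ g in Set.Ioo (0:ℝ) 1, wgam α β a0 a1 g *
          ∫⁻ x, dlam a0 b0 g x * ∫⁻ y, dlam a1 b1 g y * s.indicator 1 (g, x, y) := by
    rw [withDensity_apply _ hs, ← lintegral_indicator hs,
      Measure.volume_eq_prod, lintegral_prod _ ((hρmeas.indicator hs).aemeasurable)]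
    have hinner : ∀ g : ℝ, (∫⁻ z : ℝ × ℝ, s.indicator ρe (g, z))
        = ∫⁻ x, ∫⁻ y, s.indicator ρe (g, x, y) := by
      intro g
      have ham : AEMeasurable (fun z : ℝ × ℝ => s.indicator ρe (g, z))
          ((volume : Measure ℝ).prod volume) :=
        ((hρmeas.indicator hs).comp measurable_prodMk_left).aemeasurable
      rw [Measure.volume_eq_prod, lintegral_prod _ ham]
    simp_rw [hinner]
    have hsind : ∀ p : ℝ × ℝ × ℝ, s.indicator ρe p = ρe p * s.indicator 1 p := by
      intro p; by_cases h : p ∈ s <;> simp [h]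
    simp_rw [hsind, hsplit]
    have hre : ∀ g x y : ℝ,
        dgam α β a0 a1 g * dlam a0 b0 g x * dlam a1 b1 g y * s.indicator 1 (g, x, y)
          = dgam α β a0 a1 g * (dlam a0 b0 g x * (dlam a1 b1 g y * s.indicator 1 (g, x, y))) := by
      intros; ring
    simp_rw [hre]
    have hmy : ∀ g x : ℝ, Measurable fun y => dlam a1 b1 g y * s.indicator 1 (g, x, y) :=
      fun g x => (dlam_meas a1 b1 g).mul
        (hind.comp (measurable_prodMk_left.comp measurable_prodMk_left))
    have hmq : ∀ g : ℝ, Measurable fun q : ℝ × ℝ =>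
        dlam a1 b1 g q.2 * s.indicator 1 (g, q.1, q.2) := fun g =>
      ((dlam_meas a1 b1 g).comp measurable_snd).mul
        (hind.comp (measurable_prodMk_left.comp (measurable_fst.prodMk measurable_snd)))
    have hmx : ∀ g : ℝ, Measurable fun x =>
        dlam a0 b0 g x * ∫⁻ y, dlam a1 b1 g y * s.indicator 1 (g, x, y) := fun g =>
      (dlam_meas a0 b0 g).mul (Measurable.lintegral_prod_right' (hmq g))
    have pull_y : ∀ g x : ℝ,
        (∫⁻ y, dgam α β a0 a1 g * (dlam a0 b0 g x * (dlam a1 b1 g y * s.indicator 1 (g, x, y))))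
          = dgam α β a0 a1 g * (dlam a0 b0 g x *
              ∫⁻ y, dlam a1 b1 g y * s.indicator 1 (g, x, y)) := by
      intro g x
      rw [lintegral_const_mul _ (((hmy g x).const_mul _) : Measurable fun y =>
        dlam a0 b0 g x * (dlam a1 b1 g y * s.indicator 1 (g, x, y))),
        lintegral_const_mul _ (hmy g x)]
    simp_rw [pull_y]
    have pull_x : ∀ g : ℝ,
        (∫⁻ x, dgam α β a0 a1 g * (dlam a0 b0 g x *
            ∫⁻ y, dlam a1 b1 g y * s.indicator 1 (g, x, y)))
          = dgam α β a0 a1 g * ∫⁻ x, dlam a0 b0 g x *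
              ∫⁻ y, dlam a1 b1 g y * s.indicator 1 (g, x, y) := fun g =>
      lintegral_const_mul _ (hmx g)
    simp_rw [pull_x]
    have hout : ∀ g : ℝ, dgam α β a0 a1 g * (∫⁻ x, dlam a0 b0 g x *
          ∫⁻ y, dlam a1 b1 g y * s.indicator 1 (g, x, y))
        = (Set.Ioo (0:ℝ) 1).indicator (fun g' => wgam α β a0 a1 g' *
            ∫⁻ x, dlam a0 b0 g' x * ∫⁻ y, dlam a1 b1 g' y * s.indicator 1 (g', x, y)) g := by
      intro g
      unfold dgam
      by_cases h : g ∈ Set.Ioo (0:ℝ) 1 <;> simp [h]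
    simp_rw [hout]
    rw [lintegral_indicator measurableSet_Ioo]
  rw [hstep1, hstep2]
  -- Step 3 : change of variables g = (1-t)/(1+t)
  have hCoV : (∫⁻ g in Set.Ioo (0:ℝ) 1, wgam α β a0 a1 g *
        ∫⁻ x, dlam a0 b0 g x * ∫⁻ y, dlam a1 b1 g y * s.indicator 1 (g, x, y))
      = ∫⁻ t in Set.Ioo (0:ℝ) 1, ENNReal.ofReal |(-2/((1+t)*(1+t)))| *
          (wgam α β a0 a1 ((1-t)/(1+t)) *
            ∫⁻ x, dlam a0 b0 ((1-t)/(1+t)) x *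
              ∫⁻ y, dlam a1 b1 ((1-t)/(1+t)) y * s.indicator 1 ((1-t)/(1+t), x, y)) := by
    conv_lhs => rw [← psi_image]
    exact my_lintegral_image measurableSet_Ioo (fun x hx => psi_deriv hx) psi_inj _
  rw [hCoV]
  apply setLIntegral_congr_fun measurableSet_Ioo
  intro t ht
  -- Step 4 : the slice identity at fixed t ∈ (0,1)
  have hpt : (0:ℝ) < 1 + t := by have := ht.1; linarith
  have hc : (0:ℝ) < (1+t)/2 := by positivity
  have hmy : ∀ x : ℝ, Measurable fun y =>
      dlam a1 b1 ((1-t)/(1+t)) y * s.indicator 1 ((1-t)/(1+t), x, y) :=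
    fun x => (dlam_meas a1 b1 _).mul
      (hind.comp (measurable_prodMk_left.comp measurable_prodMk_left))
  have hmq : Measurable fun q : ℝ × ℝ =>
      dlam a1 b1 ((1-t)/(1+t)) q.2 * s.indicator 1 ((1-t)/(1+t), q.1, q.2) :=
    ((dlam_meas a1 b1 _).comp measurable_snd).mul
      (hind.comp (measurable_prodMk_left.comp (measurable_fst.prodMk measurable_snd)))
  have hmx : Measurable fun x => dlam a0 b0 ((1-t)/(1+t)) x *
      ∫⁻ y, dlam a1 b1 ((1-t)/(1+t)) y * s.indicator 1 ((1-t)/(1+t), x, y) :=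
    (dlam_meas a0 b0 _).mul (Measurable.lintegral_prod_right' hmq)
  have hmv : ∀ x : ℝ, Measurable fun v =>
      dens a1 b1 v * s.indicator 1 ((1-t)/(1+t), x, v * ((1+t)/2)) :=
    fun x => (dens_meas a1 b1).mul (hind.comp
      (measurable_prodMk_left.comp (measurable_prodMk_left.comp
        (measurable_id.mul_const _))))
  have hJ : ∀ x : ℝ, (∫⁻ y, dlam a1 b1 ((1-t)/(1+t)) y * s.indicator 1 ((1-t)/(1+t), x, y))
      = ENNReal.ofReal ((1+t)/2) * (ENNReal.ofReal (((1+t)/2) ^ (a1-1)) *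
          ∫⁻ v, dens a1 b1 v * s.indicator 1 ((1-t)/(1+t), x, v * ((1+t)/2))) := by
    intro x
    rw [my_lintegral_scale' hc (hmy x)]
    simp_rw [dlam_scale ht, mul_assoc]
    rw [lintegral_const_mul _ (hmv x)]
  have hmu : Measurable fun u => dens a0 b0 u *
      ∫⁻ v, dens a1 b1 v * s.indicator 1 ((1-t)/(1+t), u * ((1+t)/2), v * ((1+t)/2)) := by
    apply (dens_meas a0 b0).mul
    apply Measurable.lintegral_prod_right'
      (f := fun q : ℝ × ℝ => dens a1 b1 q.2 *
        s.indicator 1 ((1-t)/(1+t), q.1 * ((1+t)/2), q.2 * ((1+t)/2)))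
    exact ((dens_meas a1 b1).comp measurable_snd).mul
      (hind.comp (measurable_prodMk_left.comp
        ((measurable_fst.mul_const _).prodMk (measurable_snd.mul_const _))))
  have hI : (∫⁻ x, dlam a0 b0 ((1-t)/(1+t)) x *
        ∫⁻ y, dlam a1 b1 ((1-t)/(1+t)) y * s.indicator 1 ((1-t)/(1+t), x, y))
      = (ENNReal.ofReal ((1+t)/2) * (ENNReal.ofReal (((1+t)/2) ^ (a0-1)) *
          (ENNReal.ofReal ((1+t)/2) * ENNReal.ofReal (((1+t)/2) ^ (a1-1))))) *
        ∫⁻ u, dens a0 b0 u * ∫⁻ v, dens a1 b1 v *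
          s.indicator 1 ((1-t)/(1+t), u * ((1+t)/2), v * ((1+t)/2)) := by
    rw [my_lintegral_scale' hc hmx]
    simp_rw [hJ, dlam_scale ht]
    have hre2 : ∀ u : ℝ,
        (ENNReal.ofReal (((1+t)/2) ^ (a0-1)) * dens a0 b0 u) *
          (ENNReal.ofReal ((1+t)/2) * (ENNReal.ofReal (((1+t)/2) ^ (a1-1)) *
            ∫⁻ v, dens a1 b1 v * s.indicator 1 ((1-t)/(1+t), u * ((1+t)/2), v * ((1+t)/2))))
        = (ENNReal.ofReal (((1+t)/2) ^ (a0-1)) * (ENNReal.ofReal ((1+t)/2) *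
            ENNReal.ofReal (((1+t)/2) ^ (a1-1)))) *
          (dens a0 b0 u * ∫⁻ v, dens a1 b1 v *
            s.indicator 1 ((1-t)/(1+t), u * ((1+t)/2), v * ((1+t)/2))) := by
      intro u; ring
    simp_rw [hre2]
    rw [lintegral_const_mul _ hmu]
    ring
  beta_reduce
  rw [hI]
  have hconst : ENNReal.ofReal |(-2/((1+t)*(1+t)))| * wgam α β a0 a1 ((1-t)/(1+t)) *
      (ENNReal.ofReal ((1+t)/2) * (ENNReal.ofReal (((1+t)/2) ^ (a0-1)) *
        (ENNReal.ofReal ((1+t)/2) * ENNReal.ofReal (((1+t)/2) ^ (a1-1)))))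
      = ENNReal.ofReal (t ^ (β - 1) * (1 - t) ^ (α - 1) / betaFn β α) := by
    have habs : |(-2/((1+t)*(1+t)))| = 2/((1+t)*(1+t)) := by
      rw [abs_div, abs_neg, abs_two, abs_of_pos (by positivity : (0:ℝ) < (1+t)*(1+t))]
    have hpow0 : ((1+t)/2) * ((1+t)/2) ^ (a0-1) = ((1+t)/2) ^ a0 := by
      nth_rewrite 1 [← Real.rpow_one ((1+t)/2)]
      rw [← Real.rpow_add hc]
      ring_nf
    have hpow1 : ((1+t)/2) * ((1+t)/2) ^ (a1-1) = ((1+t)/2) ^ a1 := by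
      nth_rewrite 1 [← Real.rpow_one ((1+t)/2)]
      rw [← Real.rpow_add hc]
      ring_nf
    have hrearr : (ENNReal.ofReal ((1+t)/2) * (ENNReal.ofReal (((1+t)/2) ^ (a0-1)) *
        (ENNReal.ofReal ((1+t)/2) * ENNReal.ofReal (((1+t)/2) ^ (a1-1)))))
        = (ENNReal.ofReal ((1+t)/2) * ENNReal.ofReal (((1+t)/2) ^ (a0-1))) *
          (ENNReal.ofReal ((1+t)/2) * ENNReal.ofReal (((1+t)/2) ^ (a1-1))) := by ring
    have ht0 : (0:ℝ) < t := ht.1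
    have ht1 : t < 1 := ht.2
    have hG0 : (0:ℝ) ≤ (1-t)/(1+t) := div_nonneg (by linarith) hpt.le
    have hGs : (0:ℝ) ≤ 1 - (1-t)/(1+t) := by
      rw [psi_one_sub hpt.ne']
      exact div_nonneg (by linarith) hpt.le
    have hGa : (0:ℝ) ≤ 1 + (1-t)/(1+t) := by
      rw [psi_one_add hpt.ne']; positivity
    have w0 : (0:ℝ) ≤ (2:ℝ) ^ α / betaFn α β *
        (((1-t)/(1+t)) ^ (α-1) * (1 - (1-t)/(1+t)) ^ (β-1) /
          (1 + (1-t)/(1+t)) ^ (α+β-a0-a1)) := by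
      apply mul_nonneg (by positivity)
      exact div_nonneg (mul_nonneg (Real.rpow_nonneg hG0 _) (Real.rpow_nonneg hGs _))
        (Real.rpow_nonneg hGa _)
    have h2m : (0:ℝ) ≤ 2/((1+t)*(1+t)) :=
      div_nonneg (by norm_num) (mul_nonneg hpt.le hpt.le)
    rw [habs, hrearr, ← ENNReal.ofReal_mul hc.le, ← ENNReal.ofReal_mul hc.le, hpow0, hpow1]
    unfold wgam
    rw [← ENNReal.ofReal_mul h2m, ← ENNReal.ofReal_mul (Real.rpow_nonneg hc.le a0),
      ← ENNReal.ofReal_mul (mul_nonneg h2m w0)]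
    congr 1
    rw [betaFn_symm β α]
    have hkey := key_real_identity α β a0 a1 (betaFn α β) hBab t ht.1 ht.2
    linear_combination hkey
  calc ENNReal.ofReal (t ^ (β - 1) * (1 - t) ^ (α - 1) / betaFn β α) *
        ∫⁻ u, dens a0 b0 u * ∫⁻ v, dens a1 b1 v *
          s.indicator 1 ((1-t)/(1+t), u * ((1+t)/2), v * ((1+t)/2))
      = (ENNReal.ofReal |(-2/((1+t)*(1+t)))| * wgam α β a0 a1 ((1-t)/(1+t)) *
          (ENNReal.ofReal ((1+t)/2) * (ENNReal.ofReal (((1+t)/2) ^ (a0-1)) *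
            (ENNReal.ofReal ((1+t)/2) * ENNReal.ofReal (((1+t)/2) ^ (a1-1)))))) *
        ∫⁻ u, dens a0 b0 u * ∫⁻ v, dens a1 b1 v *
          s.indicator 1 ((1-t)/(1+t), u * ((1+t)/2), v * ((1+t)/2)) := by rw [hconst]
    _ = ENNReal.ofReal |(-2/((1+t)*(1+t)))| * (wgam α β a0 a1 ((1-t)/(1+t)) *
          ((ENNReal.ofReal ((1+t)/2) * (ENNReal.ofReal (((1+t)/2) ^ (a0-1)) *
            (ENNReal.ofReal ((1+t)/2) * ENNReal.ofReal (((1+t)/2) ^ (a1-1))))) *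
          ∫⁻ u, dens a0 b0 u * ∫⁻ v, dens a1 b1 v *
            s.indicator 1 ((1-t)/(1+t), u * ((1+t)/2), v * ((1+t)/2)))) := by ring


end DallalAux

open DallalAux

/-- If `γ, U, V` are independent with `(1-γ)/(1+γ) ~ Beta(β,α)`, `U ~ Beta(a0,b0)`,
`V ~ Beta(a1,b1)`, then `(γ, U/(1+γ), V/(1+γ))` has density
`(2^α/B(α,β)) γ^{α-1}(1-γ)^{β-1}/(1+γ)^{α+β-a0-a1} ·
λ0^{a0-1}[1-(1+γ)λ0]^{b0-1}/B(a0,b0) · λ1^{a1-1}[1-(1+γ)λ1]^{b1-1}/B(a1,b1)`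
on `Ω = {0<γ<1, 0<λ0,λ1<1/(1+γ)}`. Taking all parameters `1/2` gives Bernardo's
reference prior for Dallal's model in the original parameterization. -/
theorem dallal_general_prior_original_parameterization
    {Ω : Type*} [MeasurableSpace Ω] (μ : Measure Ω) [IsProbabilityMeasure μ]
    (α β a0 b0 a1 b1 : ℝ)
    (hα : 0 < α) (hβ : 0 < β) (ha0 : 0 < a0) (hb0 : 0 < b0) (ha1 : 0 < a1) (hb1 : 0 < b1)
    (G U V : Ω → ℝ) (hG : Measurable G) (hU : Measurable U) (hV : Measurable V)
    (hindep : iIndepFun ![G, U, V] μ)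
    (hGlaw : Measure.map (fun ω => (1 - G ω) / (1 + G ω)) μ = betaLaw β α)
    (hUlaw : Measure.map U μ = betaLaw a0 b0)
    (hVlaw : Measure.map V μ = betaLaw a1 b1) :
    Measure.map (fun ω => (G ω, U ω / (1 + G ω), V ω / (1 + G ω))) μ =
      volume.withDensity (fun p => ENNReal.ofReal
        (Set.indicator
          {q : ℝ × ℝ × ℝ | 0 < q.1 ∧ q.1 < 1 ∧
            0 < q.2.1 ∧ q.2.1 < 1 / (1 + q.1) ∧ 0 < q.2.2 ∧ q.2.2 < 1 / (1 + q.1)}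
          (fun q =>
            (2 : ℝ) ^ α / betaFn α β * (q.1 ^ (α - 1) * (1 - q.1) ^ (β - 1) /
              (1 + q.1) ^ (α + β - a0 - a1)) *
            (q.2.1 ^ (a0 - 1) * (1 - (1 + q.1) * q.2.1) ^ (b0 - 1) / betaFn a0 b0) *
            (q.2.2 ^ (a1 - 1) * (1 - (1 + q.1) * q.2.2) ^ (b1 - 1) / betaFn a1 b1)) p)) := by
  have hT : Measurable (fun ω => (1 - G ω) / (1 + G ω)) :=
    (measurable_const.sub hG).div (measurable_const.add hG)
  have hUV : Measurable (fun ω => (U ω, V ω)) := hU.prodMk hV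
  have hnull : μ {ω | 1 + G ω = 0} = 0 := by
    have hsub : {ω | 1 + G ω = 0} ⊆ (fun ω => (1 - G ω) / (1 + G ω)) ⁻¹' {0} := by
      intro ω h
      simp only [Set.mem_setOf_eq] at h
      simp [Set.mem_preimage, h, div_zero]
    refine measure_mono_null hsub ?_
    have hzero : μ ((fun ω => (1 - G ω) / (1 + G ω)) ⁻¹' {0}) = (betaLaw β α) {0} := by
      rw [← hGlaw, Measure.map_apply hT (measurableSet_singleton 0)]
    rw [hzero, betaLaw_eq, withDensity_apply _ (measurableSet_singleton 0),
      setLIntegral_measure_zero _ _ Real.volume_singleton]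
  have hae : (fun ω => (G ω, U ω / (1 + G ω), V ω / (1 + G ω))) =ᵐ[μ]
      (fun ω => Hfun ((1 - G ω) / (1 + G ω), U ω, V ω)) := by
    have h1 : ∀ᵐ ω ∂μ, 1 + G ω ≠ 0 := by
      rw [ae_iff]
      simp only [ne_eq, not_not]
      exact hnull
    filter_upwards [h1] with ω hω
    have e2 : 1 + (1 - G ω)/(1 + G ω) = 2/(1 + G ω) := psi_one_add hω
    simp only [Hfun, Prod.mk.injEq]
    refine ⟨(psi_invol hω).symm, ?_, ?_⟩
    · rw [e2]
      field_simp
    · rw [e2]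
      field_simp
  rw [Measure.map_congr hae]
  have hmm : Measure.map (fun ω => Hfun ((1 - G ω) / (1 + G ω), U ω, V ω)) μ
      = Measure.map Hfun (Measure.map (fun ω => ((1 - G ω) / (1 + G ω), U ω, V ω)) μ) :=
    (Measure.map_map Hfun_meas (hT.prodMk hUV)).symm
  rw [hmm]
  have hUVindep : IndepFun U V μ := by
    have h := hindep.indepFun (show (1 : Fin 3) ≠ 2 by decide)
    simpa using h
  have hGUV : IndepFun G (fun ω => (U ω, V ω)) μ := by
    have hmeas3 : ∀ i, Measurable (![G, U, V] i) := by
      intro i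
      fin_cases i
      · simpa using hG
      · simpa using hU
      · simpa using hV
    have h := (hindep.indepFun_prodMk hmeas3 1 2 0 (by decide) (by decide)).symm
    simpa using h
  have hTUVindep : IndepFun (fun ω => (1 - G ω) / (1 + G ω)) (fun ω => (U ω, V ω)) μ :=
    hGUV.comp ((measurable_const.sub measurable_id).div (measurable_const.add measurable_id))
      measurable_id
  have hjoint : Measure.map (fun ω => ((1 - G ω) / (1 + G ω), U ω, V ω)) μ
      = (betaLaw β α).prod ((betaLaw a0 b0).prod (betaLaw a1 b1)) := by
    rw [(indepFun_iff_map_prod_eq_prod_map_map hT.aemeasurable hUV.aemeasurable).mp hTUVindep,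
      hGlaw,
      (indepFun_iff_map_prod_eq_prod_map_map hU.aemeasurable hV.aemeasurable).mp hUVindep,
      hUlaw, hVlaw]
  rw [hjoint, main_comp hα hβ ha0 hb0 ha1 hb1]
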